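/- Let S be a real 2n×2n symplectic matrix written in n×n blocks S = [[A,B],[C,D]]. Then |det((A + D) + i(C − B))|² = det(I + SᵀS), where the left-hand determinant is of a complex n×n matrix and the right-hand determinant is of a real 2n×2n matrix. -/

import Mathlib

open Matrix

/-- The standard symplectic matrix `J = [[0, −I],[I, 0]]` in `n×n` blocks. -/
noncomputable def Jmat (n : ℕ) : Matrix (Fin n ⊕ Fin n) (Fin n ⊕ Fin n) ℝ :=
  Matrix.fromBlocks 0 (-1) 1 0

lemma aux_block_det (n : ℕ) (X Y : Matrix (Fin n) (Fin n) ℂ) :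
    (Matrix.fromBlocks X (-Y) Y X).det =
      (X + Complex.I • Y).det * (X - Complex.I • Y).det := by
  have h : Matrix.fromBlocks 1 (Complex.I • (1 : Matrix (Fin n) (Fin n) ℂ)) 0 1 *
      Matrix.fromBlocks X (-Y) Y X *
      Matrix.fromBlocks 1 (-(Complex.I • (1 : Matrix (Fin n) (Fin n) ℂ))) 0 1 =
      Matrix.fromBlocks (X + Complex.I • Y) 0 Y (X - Complex.I • Y) := by
    simp only [Matrix.fromBlocks_multiply, Matrix.mul_smul, Matrix.smul_mul, Matrix.one_mul,
      Matrix.mul_one, Matrix.mul_neg, Matrix.neg_mul, Matrix.zero_mul, Matrix.mul_zero,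
      smul_smul, Complex.I_mul_I, add_zero, zero_add, neg_smul, one_smul, neg_neg]
    rw [Matrix.fromBlocks_inj]
    refine ⟨?_, ?_, ?_, ?_⟩ <;> (match_scalars <;> simp [Complex.I_sq] )
  have hd := congrArg Matrix.det h
  rw [Matrix.det_mul, Matrix.det_mul, Matrix.det_fromBlocks_zero₂₁,
    Matrix.det_fromBlocks_zero₂₁, Matrix.det_fromBlocks_zero₁₂, Matrix.det_one] at hd
  simpa using hd

/-- Let `S` be a real `2n×2n` symplectic matrix written in `n×n` blocks
`S = [[A,B],[C,D]]`. Then `|det((A + D) + i(C − B))|² = det(I + SᵀS)`. -/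
theorem statement8 (n : ℕ) (hn : 1 ≤ n)
    (S : Matrix (Fin n ⊕ Fin n) (Fin n ⊕ Fin n) ℝ)
    (A B C D : Matrix (Fin n) (Fin n) ℝ)
    (hblocks : S = Matrix.fromBlocks A B C D)
    (hsymp : Sᵀ * Jmat n * S = Jmat n) :
    ‖((A + D).map Complex.ofReal + Complex.I • (C - B).map Complex.ofReal).det‖ ^ 2 =
      (1 + Sᵀ * S).det := by
  set X : Matrix (Fin n) (Fin n) ℝ := A + D with hX
  set Y : Matrix (Fin n) (Fin n) ℝ := C - B with hY
  set T : Matrix (Fin n ⊕ Fin n) (Fin n ⊕ Fin n) ℝ := Matrix.fromBlocks D (-C) (-B) A with hT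
  -- J * J = -1
  have hJJ : Jmat n * Jmat n = -1 := by
    simp [Jmat, Matrix.fromBlocks_multiply, ← Matrix.fromBlocks_one,
      Matrix.fromBlocks_neg]
  -- Sᵀ * T = 1
  have hST : Sᵀ * T = 1 := by
    have h1 : Sᵀ * Jmat n * S * Jmat n = Jmat n * Jmat n := by rw [hsymp]
    have h2 : Sᵀ * (Jmat n * S * Jmat n) = -1 := by
      rw [← hJJ, ← h1]; simp only [Matrix.mul_assoc]
    have h3 : Jmat n * S * Jmat n = -T := by
      rw [hblocks, hT]
      simp [Jmat, Matrix.fromBlocks_multiply, Matrix.fromBlocks_neg]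
    rw [h3] at h2
    have := congrArg (fun M => -M) h2
    simpa using this
  -- 1 + SᵀS = Sᵀ (T + S)
  have hfac : 1 + Sᵀ * S = Sᵀ * (T + S) := by
    rw [Matrix.mul_add, hST]
  -- T + S = fromBlocks X (-Y) Y X
  have hTS : T + S = Matrix.fromBlocks X (-Y) Y X := by
    rw [hT, hblocks, Matrix.fromBlocks_add, Matrix.fromBlocks_inj]
    refine ⟨?_, ?_, ?_, ?_⟩ <;> simp only [hX, hY] <;> abel
  -- positivity
  have hpd : (1 + Sᵀ * S).PosDef := by
    refine Matrix.PosDef.add_posSemidef Matrix.PosDef.one ?_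
    simpa [Matrix.conjTranspose_eq_transpose_of_trivial] using
      Matrix.posSemidef_conjTranspose_mul_self S
  have hpos : 0 < (1 + Sᵀ * S).det := hpd.det_pos
  -- det S squared is 1
  have hJ2 : (Jmat n).det ^ 2 = 1 := by
    have h := congrArg Matrix.det hJJ
    rw [Matrix.det_mul, Matrix.det_neg, Matrix.det_one] at h
    rw [sq, h]
    simp [Fintype.card_sum, Even.neg_one_pow ⟨n, rfl⟩]
  have hS2 : S.det ^ 2 = 1 := by
    have h := congrArg Matrix.det hsymp
    rw [Matrix.det_mul, Matrix.det_mul, Matrix.det_transpose] at h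
    have hJne : (Jmat n).det ≠ 0 := by
      intro h0; rw [h0] at hJ2; simp at hJ2
    have : S.det * S.det * (Jmat n).det = 1 * (Jmat n).det := by
      rw [one_mul]; nlinarith [h]
    have := mul_right_cancel₀ hJne this
    rw [sq]; linarith
  -- block determinant identity
  set z : ℂ := (X.map Complex.ofReal + Complex.I • Y.map Complex.ofReal).det with hz
  have hbd : (Matrix.fromBlocks X (-Y) Y X).det = ‖z‖ ^ 2 := by
    apply Complex.ofReal_injective
    have h1 : ((Matrix.fromBlocks X (-Y) Y X).det : ℂ) =
        ((Matrix.fromBlocks X (-Y) Y X).map Complex.ofReal).det :=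
      by exact
        RingHom.map_det Complex.ofRealHom (Matrix.fromBlocks X (-Y) Y X)
    have h2 : (Matrix.fromBlocks X (-Y) Y X).map Complex.ofReal =
        Matrix.fromBlocks (X.map Complex.ofReal) (-(Y.map Complex.ofReal))
          (Y.map Complex.ofReal) (X.map Complex.ofReal) := by
      rw [Matrix.fromBlocks_map, Matrix.fromBlocks_inj]
      refine ⟨rfl, ?_, rfl, rfl⟩
      ext i j
      simp [Matrix.map_apply]
    have h3 : (X.map Complex.ofReal - Complex.I • Y.map Complex.ofReal) =
        (X.map Complex.ofReal + Complex.I • Y.map Complex.ofReal).map (starRingEnd ℂ) := by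
      ext i j
      simp [Matrix.map_apply, Matrix.add_apply, Matrix.sub_apply, Matrix.smul_apply,
        Complex.ext_iff]
    have h4 : ((X.map Complex.ofReal + Complex.I • Y.map Complex.ofReal).map
        (starRingEnd ℂ)).det = starRingEnd ℂ z := by
      rw [hz, RingHom.map_det, RingHom.mapMatrix_apply]
    rw [h1, h2, aux_block_det, h3, h4, ← hz, Complex.mul_conj, ← Complex.sq_norm]
  -- put it together
  have hdet1 : (1 + Sᵀ * S).det = S.det * (‖z‖ ^ 2) := by
    rw [hfac, Matrix.det_mul, Matrix.det_transpose, hTS, hbd]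
  have hfac' : (S.det - 1) * (S.det + 1) = 0 := by nlinarith [hS2]
  have habs : (0 : ℝ) ≤ ‖z‖ ^ 2 := by positivity
  rcases mul_eq_zero.mp hfac' with h | h
  · have hS1 : S.det = 1 := by linarith
    rw [hdet1, hS1, one_mul]
  · have hS1 : S.det = -1 := by linarith
    rw [hS1] at hdet1
    nlinarith [hpos, hdet1]
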